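/- Let u : E → [-∞, ∞) be a function on the closed right half-plane E = {w ∈ ℂ : Re w ≥ 0} that depends only on Re w, is upper semicontinuous on E, and is subharmonic on the open half-plane {Re w > 0}. Then t ↦ u(t) (for t ∈ [0, ∞), identifying t with t + i·0) is convex on (0, ∞), and if additionally u satisfies the sub-mean value inequality at every boundary point of E for discs contained in E, then u is convex on [0, ∞). -/

import Mathlib

open MeasureTheory Real

/-- Extreme value theorem for upper semicontinuous functions on compact sets. -/
lemma usc_max_aux {g : ℝ → ℝ} {K : Set ℝ} (hK : IsCompact K) (hne : K.Nonempty)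
    (hg : UpperSemicontinuousOn g K) : ∃ x ∈ K, ∀ y ∈ K, g y ≤ g x := by
  by_contra hcon
  push_neg at hcon
  have h1 : ∀ x : K, ∃ U : Set ℝ, IsOpen U ∧ (x : ℝ) ∈ U ∧
      ∃ y, y ∈ K ∧ ∀ w ∈ U ∩ K, g w < g y := by
    rintro ⟨x, hx⟩
    obtain ⟨y, hy, hlt⟩ := hcon x hx
    have hev := hg x hx (g y) hlt
    obtain ⟨U, hUo, hxU, hU⟩ := mem_nhdsWithin.1 hev
    exact ⟨U, hUo, hxU, y, hy, fun w hw => hU ⟨hw.1, hw.2⟩⟩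
  choose U hUo hxU y hyK hlt using h1
  have hcover : K ⊆ ⋃ i : K, U i := by
    intro x hx
    exact Set.mem_iUnion.2 ⟨⟨x, hx⟩, hxU ⟨x, hx⟩⟩
  obtain ⟨t, ht⟩ := hK.elim_finite_subcover U hUo hcover
  obtain ⟨x0, hx0⟩ := hne
  have htne : t.Nonempty := by
    obtain ⟨i, hi, _⟩ := Set.mem_iUnion₂.1 (ht hx0)
    exact ⟨i, hi⟩
  obtain ⟨i, hit, hmax⟩ := t.exists_max_image (fun i => g (y i)) htne
  obtain ⟨j, hjt, hj⟩ := Set.mem_iUnion₂.1 (ht (hyK i))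
  have : g (y i) < g (y j) := hlt j (y i) ⟨hj, hyK i⟩
  exact absurd (hmax j hjt) (not_le.2 this)

/-- Superlevel sets of usc functions on closed sets are closed. -/
lemma usc_superlevel_closed {g : ℝ → ℝ} {K : Set ℝ} (hKc : IsClosed K)
    (hg : UpperSemicontinuousOn g K) (M : ℝ) : IsClosed {x | x ∈ K ∧ M ≤ g x} := by
  rw [← isOpen_compl_iff]
  rw [isOpen_iff_mem_nhds]
  intro z hz
  by_cases hzK : z ∈ K
  · have hgz : g z < M := by
      by_contra h
      exact hz ⟨hzK, not_lt.1 h⟩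
    have hev := hg z hzK M hgz
    obtain ⟨V, hVo, hzV, hV⟩ := mem_nhdsWithin.1 hev
    refine Filter.mem_of_superset (hVo.mem_nhds hzV) ?_
    intro w hw
    intro hwS
    exact absurd (hV ⟨hw, hwS.1⟩) (not_lt.2 hwS.2)
  · refine Filter.mem_of_superset (hKc.isOpen_compl.mem_nhds hzK) ?_
    intro w hw hwS
    exact hw hwS.1

lemma usc_add_cont {f φ : ℝ → ℝ} {s : Set ℝ} {x : ℝ}
    (hf : UpperSemicontinuousWithinAt f s x) (hφ : ContinuousWithinAt φ s x) :
    UpperSemicontinuousWithinAt (fun t => f t + φ t) s x := by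
  intro c hc
  have hc' : f x + φ x < c := hc
  set ε := (c - (f x + φ x)) / 2 with hε
  have hεpos : 0 < ε := by simp only [hε]; linarith
  have h1 := hf (f x + ε) (by linarith)
  have h2 : ∀ᶠ t in nhdsWithin x s, φ t < φ x + ε :=
    hφ.eventually_lt_const (by linarith)
  filter_upwards [h1, h2] with t ht1 ht2
  have : c = (f x + ε) + (φ x + ε) := by simp only [hε]; ring
  linarith

lemma integral_re_ball_zero {r : ℝ} :
    (∫ w in Metric.ball (0:ℂ) r, w.re) = 0 := by
  have hmp : MeasurePreserving (fun w : ℂ => -w) volume volume :=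
    Measure.measurePreserving_neg _
  have hemb : MeasurableEmbedding (fun w : ℂ => -w) :=
    (MeasurableEquiv.neg ℂ).measurableEmbedding
  have hpre : (fun w : ℂ => -w) ⁻¹' Metric.ball (0:ℂ) r = Metric.ball (0:ℂ) r := by
    ext w
    simp [Metric.mem_ball, dist_zero_right]
  have key := hmp.setIntegral_preimage_emb hemb (fun w => w.re) (Metric.ball (0:ℂ) r)
  rw [hpre] at key
  have : (∫ w in Metric.ball (0:ℂ) r, (-w).re) = - ∫ w in Metric.ball (0:ℂ) r, w.re := by
    simp only [Complex.neg_re]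
    exact integral_neg _
  rw [this] at key
  linarith

lemma vol_ball_toReal (z : ℂ) {r : ℝ} (hr : 0 < r) :
    (volume (Metric.ball z r)).toReal = π * r ^ 2 := by
  rw [Complex.volume_ball]
  rw [ENNReal.toReal_mul, ← ENNReal.ofReal_pow hr.le, ENNReal.toReal_ofReal (by positivity)]
  simp [NNReal.coe_real_pi, mul_comm]

lemma integrableOn_re_ball (z : ℂ) (r : ℝ) :
    IntegrableOn (fun w : ℂ => w.re) (Metric.ball z r) volume :=
  (Complex.continuous_re.continuousOn.integrableOn_compact
    (isCompact_closedBall z r)).mono_set Metric.ball_subset_closedBall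

lemma integral_re_ball (z : ℂ) {r : ℝ} (hr : 0 < r) :
    (∫ w in Metric.ball z r, w.re) = π * r ^ 2 * z.re := by
  have hmp : MeasurePreserving (fun w : ℂ => w + z) volume volume :=
    measurePreserving_add_right volume z
  have hemb : MeasurableEmbedding (fun w : ℂ => w + z) :=
    (MeasurableEquiv.addRight z).measurableEmbedding
  have hpre : (fun w : ℂ => w + z) ⁻¹' Metric.ball z r = Metric.ball (0:ℂ) r := by
    ext w
    simp [Metric.mem_ball, dist_eq_norm]
  have key := hmp.setIntegral_preimage_emb hemb (fun w => w.re) (Metric.ball z r)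
  rw [hpre] at key
  have expand : (∫ w in Metric.ball (0:ℂ) r, (w + z).re)
      = (∫ w in Metric.ball (0:ℂ) r, w.re) + ∫ _w in Metric.ball (0:ℂ) r, z.re := by
    rw [← integral_add (integrableOn_re_ball 0 r)]
    · simp [Complex.add_re]
    · exact integrableOn_const measure_ball_lt_top.ne
  rw [expand, integral_re_ball_zero, setIntegral_const, measureReal_def, vol_ball_toReal 0 hr,
    zero_add, smul_eq_mul] at key
  rw [← key]

lemma integral_affine_ball (z : ℂ) {r : ℝ} (hr : 0 < r) (c₀ c₁ : ℝ) :
    (∫ w in Metric.ball z r, (c₀ + c₁ * w.re)) = π * r ^ 2 * (c₀ + c₁ * z.re) := by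
  rw [integral_add (integrableOn_const measure_ball_lt_top.ne :
      IntegrableOn (fun _ : ℂ => c₀) (Metric.ball z r) volume)
    ((integrableOn_re_ball z r).const_mul c₁)]
  rw [integral_const_mul, integral_re_ball z hr, setIntegral_const, measureReal_def, vol_ball_toReal z hr,
    smul_eq_mul]
  ring

section Main

variable {u : ℂ → ℝ}

lemma fusc (husc : UpperSemicontinuousOn u {z : ℂ | 0 ≤ z.re}) :
    UpperSemicontinuousOn (fun t : ℝ => u (t : ℂ)) (Set.Ici 0) := by
  intro x hx c hc
  have hx' : (x : ℂ) ∈ {z : ℂ | 0 ≤ z.re} := by simpa using hx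
  have hev := husc _ hx' c hc
  have htend : Filter.Tendsto (fun t : ℝ => (t : ℂ)) (nhdsWithin x (Set.Ici 0))
      (nhdsWithin (x : ℂ) {z : ℂ | 0 ≤ z.re}) := by
    apply ContinuousWithinAt.tendsto_nhdsWithin
      Complex.continuous_ofReal.continuousWithinAt
    intro t ht
    simpa using ht
  exact htend.eventually hev

set_option maxHeartbeats 1000000 in
/-- The key comparison lemma: `u` restricted to the reals lies below chords on `(0,∞)`. -/
lemma key_lemma
    (hre : ∀ z w : ℂ, 0 ≤ z.re → 0 ≤ w.re → z.re = w.re → u z = u w)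
    (husc : UpperSemicontinuousOn u {z : ℂ | 0 ≤ z.re})
    (hloc : LocallyIntegrableOn u {z : ℂ | 0 < z.re})
    (hsubmean : ∀ z : ℂ, 0 < z.re → ∀ r : ℝ, 0 < r →
      Metric.closedBall z r ⊆ {w : ℂ | 0 < w.re} →
      u z ≤ (1 / (π * r ^ 2)) * ∫ w in Metric.ball z r, u w)
    {a b : ℝ} (ha : 0 < a) (hab : a < b) :
    ∀ x ∈ Set.Icc a b, u (x : ℂ) ≤ u (a : ℂ) +
      (u (b : ℂ) - u (a : ℂ)) / (b - a) * (x - a) := by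
  set f : ℝ → ℝ := fun t => u (t : ℂ) with hf
  set sl : ℝ := (f b - f a) / (b - a) with hsl
  set φ : ℝ → ℝ := fun t => -(f a + sl * (t - a)) with hφ
  set g : ℝ → ℝ := fun t => f t + φ t with hg
  by_contra hcon
  push_neg at hcon
  obtain ⟨z, hzI, hzgt⟩ := hcon
  have hba : b - a ≠ 0 := by linarith
  -- usc of g on Icc a b
  have hIcc_sub : Set.Icc a b ⊆ Set.Ici (0:ℝ) := fun t ht => le_of_lt (lt_of_lt_of_le ha ht.1)
  have hfusc : UpperSemicontinuousOn f (Set.Icc a b) := (fusc husc).mono hIcc_sub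
  have hgusc : UpperSemicontinuousOn g (Set.Icc a b) := by
    intro x hx
    exact usc_add_cont (hfusc x hx)
      (Continuous.continuousWithinAt
        ((continuous_const.add (continuous_const.mul
          (continuous_id.sub continuous_const))).neg))
  -- maximum of g
  obtain ⟨x₀, hx₀I, hmax⟩ := usc_max_aux isCompact_Icc ⟨a, Set.left_mem_Icc.2 hab.le⟩ hgusc
  set M : ℝ := g x₀ with hM
  have hMpos : 0 < M := by
    have h1 : 0 < g z := by simp only [hg, hφ]; linarith
    exact lt_of_lt_of_le h1 (hmax z hzI)
  have hga : g a = 0 := by simp only [hg, hφ]; ring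
  have hgb : g b = 0 := by
    simp only [hg, hφ, hsl]
    field_simp
    ring
  -- the rightmost maximum point
  set S : Set ℝ := {x | x ∈ Set.Icc a b ∧ M ≤ g x} with hS
  have hScl : IsClosed S := usc_superlevel_closed isClosed_Icc hgusc M
  have hScomp : IsCompact S := isCompact_Icc.of_isClosed_subset hScl (fun x hx => hx.1)
  have hSne : S.Nonempty := ⟨x₀, hx₀I, le_refl M⟩
  set x₁ : ℝ := sSup S with hx₁def
  have hx₁S : x₁ ∈ S := hScomp.sSup_mem hSne
  have hx₁I : x₁ ∈ Set.Icc a b := hx₁S.1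
  have hgx₁ : g x₁ = M := le_antisymm (hmax x₁ hx₁I) hx₁S.2
  have hax₁ : a < x₁ := by
    rcases lt_or_eq_of_le hx₁I.1 with h | h
    · exact h
    · exfalso; rw [← h] at hgx₁; rw [hga] at hgx₁; linarith
  have hx₁b : x₁ < b := by
    rcases lt_or_eq_of_le hx₁I.2 with h | h
    · exact h
    · exfalso; rw [h] at hgx₁; rw [hgb] at hgx₁; linarith
  -- set up the ball
  set r : ℝ := min (x₁ - a) (b - x₁) / 2 with hrdef
  have hr : 0 < r := by
    apply div_pos _ (by norm_num)
    exact lt_min (by linarith) (by linarith)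
  have hra : r < x₁ - a := by
    have h1 : min (x₁ - a) (b - x₁) ≤ x₁ - a := min_le_left _ _
    have : 0 < min (x₁ - a) (b - x₁) := lt_min (by linarith) (by linarith)
    simp only [hrdef]; linarith
  have hrb : r < b - x₁ := by
    have h1 : min (x₁ - a) (b - x₁) ≤ b - x₁ := min_le_right _ _
    have : 0 < min (x₁ - a) (b - x₁) := lt_min (by linarith) (by linarith)
    simp only [hrdef]; linarith
  set zc : ℂ := ((x₁ : ℝ) : ℂ) with hzc
  have hre_bound : ∀ w : ℂ, w ∈ Metric.closedBall zc r → a < w.re ∧ w.re < b := by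
    intro w hw
    have h1 : ‖w - zc‖ ≤ r := by
      rw [Metric.mem_closedBall, Complex.dist_eq] at hw
      exact hw
    have h2 : |w.re - x₁| ≤ r := by
      have := Complex.abs_re_le_norm (w - zc)
      simp only [Complex.sub_re, hzc, Complex.ofReal_re] at this
      linarith
    rw [abs_le] at h2
    constructor <;> linarith
  have hball : Metric.closedBall zc r ⊆ {w : ℂ | 0 < w.re} := by
    intro w hw
    have := (hre_bound w hw).1
    simp only [Set.mem_setOf_eq]
    linarith
  -- integrability of u on the ball
  have hint_u : IntegrableOn u (Metric.ball zc r) volume :=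
    (hloc.integrableOn_compact_subset hball (isCompact_closedBall zc r)).mono_set
      Metric.ball_subset_closedBall
  -- the submean inequality
  have hzcre : 0 < zc.re := by simp [hzc]; linarith
  have hsub := hsubmean zc hzcre r hr hball
  set A : ℝ := π * r ^ 2 with hA
  have hApos : 0 < A := by positivity
  -- u w = f w.re for w in the ball
  have hval : ∀ w : ℂ, w ∈ Metric.ball zc r → u w = f w.re := by
    intro w hw
    have hb := hre_bound w (Metric.ball_subset_closedBall hw)
    have h0 : 0 ≤ w.re := by linarith [hb.1]
    exact hre w ((w.re : ℝ) : ℂ) h0 (by simp [h0]) (by simp)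
  -- dominating affine function
  set c₀ : ℝ := M + f a - sl * a with hc₀
  set c₁ : ℝ := sl with hc₁
  have hdom : ∀ w : ℂ, w ∈ Metric.ball zc r → u w ≤ c₀ + c₁ * w.re := by
    intro w hw
    have hb := hre_bound w (Metric.ball_subset_closedBall hw)
    have hwI : w.re ∈ Set.Icc a b := ⟨hb.1.le, hb.2.le⟩
    have := hmax w.re hwI
    rw [hval w hw]
    simp only [hg, hφ] at this
    simp only [hc₀, hc₁]
    linarith
  -- the function h
  set h : ℂ → ℝ := fun w => c₀ + c₁ * w.re - u w with hh
  have hcont_aff : Continuous fun w : ℂ => c₀ + c₁ * w.re :=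
    continuous_const.add (continuous_const.mul Complex.continuous_re)
  have hint_aff : IntegrableOn (fun w : ℂ => c₀ + c₁ * w.re) (Metric.ball zc r) volume :=
    (hcont_aff.continuousOn.integrableOn_compact (isCompact_closedBall zc r)).mono_set
      Metric.ball_subset_closedBall
  have hint_h : IntegrableOn h (Metric.ball zc r) volume := hint_aff.sub hint_u
  have hIaff : (∫ w in Metric.ball zc r, (c₀ + c₁ * w.re)) = A * (c₀ + c₁ * x₁) := by
    rw [integral_affine_ball zc hr c₀ c₁]
    simp [hzc, hA]
  have hIh : (∫ w in Metric.ball zc r, h w)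
      = A * (c₀ + c₁ * x₁) - ∫ w in Metric.ball zc r, u w := by
    simp only [hh]
    rw [integral_sub hint_aff hint_u, hIaff]
  -- u zc = M + affine value
  have huzc : u zc = c₀ + c₁ * x₁ := by
    have : u zc = f x₁ := by simp [hzc, hf]
    rw [this]
    have := hgx₁
    simp only [hg, hφ] at this
    simp only [hc₀, hc₁]
    linarith
  -- integral of h is nonpositive
  have hIh_le : (∫ w in Metric.ball zc r, h w) ≤ 0 := by
    rw [hIh]
    have h2 : A * (c₀ + c₁ * x₁) ≤ ∫ w in Metric.ball zc r, u w := by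
      rw [← huzc]
      have := hsub
      rw [div_mul_eq_mul_div, one_mul, le_div_iff₀ hApos] at this
      · linarith [this]
    linarith
  have hIh_ge : 0 ≤ ∫ w in Metric.ball zc r, h w :=
    setIntegral_nonneg Metric.isOpen_ball.measurableSet
      (fun w hw => by simp only [hh]; linarith [hdom w hw])
  have hIh0 : (∫ w in Metric.ball zc r, h w) = 0 := le_antisymm hIh_le hIh_ge
  -- h = 0 a.e. on the ball
  have hnn_ae : 0 ≤ᵐ[volume.restrict (Metric.ball zc r)] h :=
    (ae_restrict_iff' Metric.isOpen_ball.measurableSet).2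
      (Filter.Eventually.of_forall (fun w hw => by
        simp only [hh, Pi.zero_apply]; linarith [hdom w hw]))
  have heq0 : h =ᵐ[volume.restrict (Metric.ball zc r)] 0 :=
    (integral_eq_zero_iff_of_nonneg_ae hnn_ae hint_h).1 hIh0
  have hnull : volume.restrict (Metric.ball zc r) {w | h w ≠ 0} = 0 := by
    have h2 := ae_iff.mp heq0
    simpa using h2
  -- the lens where h > 0
  set L : Set ℂ := Metric.ball zc r ∩ {w : ℂ | x₁ < w.re} with hL
  have hLopen : IsOpen L :=
    Metric.isOpen_ball.inter (isOpen_lt continuous_const Complex.continuous_re)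
  have hLne : L.Nonempty := by
    refine ⟨((x₁ + r / 2 : ℝ) : ℂ), ?_, ?_⟩
    · rw [Metric.mem_ball, Complex.dist_eq, hzc]
      rw [← Complex.ofReal_sub]
      rw [Complex.norm_real, Real.norm_eq_abs]
      rw [abs_of_pos (by linarith)]
      linarith
    · simp only [Set.mem_setOf_eq, Complex.ofReal_re]
      linarith
  have hLpos : 0 < volume L := hLopen.measure_pos volume hLne
  have hLsub : L ⊆ {w | h w ≠ 0} := by
    rintro w ⟨hwb, hwre⟩
    have hb := hre_bound w (Metric.ball_subset_closedBall hwb)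
    have hwI : w.re ∈ Set.Icc a b := ⟨hb.1.le, hb.2.le⟩
    have hnotS : w.re ∉ S := by
      intro hmem
      have : w.re ≤ x₁ := le_csSup hScomp.bddAbove hmem
      exact absurd this (not_le.2 hwre)
    have hglt : g w.re < M := by
      by_contra hge
      exact hnotS ⟨hwI, not_lt.1 hge⟩
    simp only [hg, hφ] at hglt
    have : u w < c₀ + c₁ * w.re := by
      rw [hval w hwb]
      simp only [hc₀, hc₁]
      linarith
    simp only [hh, Set.mem_setOf_eq]
    intro heq
    linarith [heq]
  have : volume L = 0 := by
    have h1 : volume.restrict (Metric.ball zc r) L = volume L := by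
      rw [Measure.restrict_apply hLopen.measurableSet]
      congr 1
      exact Set.inter_eq_self_of_subset_left Set.inter_subset_left
    rw [← h1]
    exact le_antisymm (le_trans (measure_mono hLsub) (le_of_eq hnull)) zero_le
  exact absurd this (ne_of_gt hLpos)

end Main

section Assemble

lemma interp_chord {f : ℝ → ℝ}
    (hkey : ∀ a b : ℝ, 0 < a → a < b → ∀ x ∈ Set.Icc a b,
      f x ≤ f a + (f b - f a) / (b - a) * (x - a)) :
    ∀ x y p q : ℝ, 0 < x → x < y → 0 ≤ p → 0 ≤ q → p + q = 1 →
      f (p * x + q * y) ≤ p * f x + q * f y := by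
  intro x y p q hx hxy hp hq hpq
  have hp1 : p = 1 - q := by linarith
  set z := p * x + q * y with hz
  have hzx2 : z - x = q * (y - x) := by rw [hz, hp1]; ring
  have hzx : x ≤ z := by nlinarith
  have hzy : z ≤ y := by nlinarith
  have h := hkey x y hx hxy z ⟨hzx, hzy⟩
  rw [hzx2] at h
  have hyx : y - x ≠ 0 := by linarith
  have heq : f x + (f y - f x) / (y - x) * (q * (y - x)) = p * f x + q * f y := by
    rw [hp1]
    field_simp
    ring
  linarith

end Assemble


/-- Let `u` be defined on the closed right half-plane `E = {Re w ≥ 0}`,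
depending only on `Re w`, upper semicontinuous on `E`, and subharmonic (locally
integrable and satisfying the sub-mean value inequality) on the open half-plane
`{Re w > 0}`. Then `t ↦ u(t)` is convex on `(0,∞)`; if moreover `u` satisfies the
sub-mean value inequality at every boundary point of `E` for discs contained in `E`,
then `t ↦ u(t)` is convex on `[0,∞)`. -/
theorem stmt_15 (u : ℂ → ℝ)
    (hre : ∀ z w : ℂ, 0 ≤ z.re → 0 ≤ w.re → z.re = w.re → u z = u w)
    (husc : UpperSemicontinuousOn u {z : ℂ | 0 ≤ z.re})
    (hloc : LocallyIntegrableOn u {z : ℂ | 0 < z.re})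
    (hsubmean : ∀ z : ℂ, 0 < z.re → ∀ r : ℝ, 0 < r →
      Metric.closedBall z r ⊆ {w : ℂ | 0 < w.re} →
      u z ≤ (1 / (π * r ^ 2)) * ∫ w in Metric.ball z r, u w) :
    ConvexOn ℝ (Set.Ioi 0) (fun t : ℝ => u (t : ℂ)) ∧
    ((∀ z : ℂ, z.re = 0 → ∀ r : ℝ, 0 < r →
        Metric.closedBall z r ⊆ {w : ℂ | 0 ≤ w.re} →
        u z ≤ (1 / (π * r ^ 2)) * ∫ w in Metric.ball z r, u w) →
      ConvexOn ℝ (Set.Ici 0) (fun t : ℝ => u (t : ℂ))) := by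
  set f : ℝ → ℝ := fun t => u (t : ℂ) with hfdef
  have hkey : ∀ a b : ℝ, 0 < a → a < b → ∀ x ∈ Set.Icc a b,
      f x ≤ f a + (f b - f a) / (b - a) * (x - a) :=
    fun a b ha hab => key_lemma hre husc hloc hsubmean ha hab
  have hinterp := interp_chord hkey
  have hconv1 : ConvexOn ℝ (Set.Ioi 0) f := by
    refine ⟨convex_Ioi 0, ?_⟩
    intro x hx y hy p q hp hq hpq
    simp only [smul_eq_mul]
    rcases lt_trichotomy x y with hlt | heq | hgt
    · exact hinterp x y p q hx hlt hp hq hpq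
    · subst heq
      have h1 : p * x + q * x = x := by rw [← add_mul, hpq, one_mul]
      have h2 : p * f x + q * f x = f x := by rw [← add_mul, hpq, one_mul]
      rw [h1, h2]
    · have h := hinterp y x q p hy hgt hq hp (by linarith)
      have h1 : q * y + p * x = p * x + q * y := by ring
      rw [h1] at h
      linarith
  refine ⟨hconv1, fun _ => ?_⟩
  have husc0 : UpperSemicontinuousOn f (Set.Ici 0) := fusc husc
  have L0 : ∀ y : ℝ, 0 < y → ∀ p q : ℝ, 0 ≤ p → 0 ≤ q → p + q = 1 →
      f (q * y) ≤ p * f 0 + q * f y := by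
    intro y hy p q hp hq hpq
    rcases eq_or_lt_of_le hq with hq0 | hqpos
    · have hp1 : p = 1 := by linarith
      rw [← hq0, hp1]
      simp
    rcases eq_or_lt_of_le hp with hp0 | hppos
    · have hq1 : q = 1 := by linarith
      rw [← hp0, hq1]
      simp
    set z := q * y with hz
    have hzpos : 0 < z := mul_pos hqpos hy
    have hq1 : q < 1 := by linarith
    have hzy : z < y := by nlinarith
    have main : ∀ ε : ℝ, 0 < ε → f z ≤ p * f 0 + q * f y + ε := by
      intro ε hε
      set c := f 0 + ε / (2 * p) with hc
      have hcgt : f 0 < c := by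
        have : 0 < ε / (2 * p) := by positivity
        simp only [hc]; linarith
      have E1 : ∀ᶠ t in nhdsWithin 0 (Set.Ioi 0), f t < c :=
        (husc0 0 (Set.mem_Ici.2 (le_refl 0)) c hcgt).filter_mono
          (nhdsWithin_mono 0 Set.Ioi_subset_Ici_self)
      have E2 : ∀ᶠ t in nhdsWithin 0 (Set.Ioi 0), t ∈ Set.Ioo 0 z :=
        Filter.eventually_mem_set.2 (Ioo_mem_nhdsGT_of_mem ⟨le_refl 0, hzpos⟩)
      have E3 : ∀ᶠ t in nhdsWithin 0 (Set.Ioi 0),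
          (y - z) / (y - t) * c + (z - t) / (y - t) * f y < p * c + q * f y + ε / 2 := by
        have hy0 : y - (0:ℝ) ≠ 0 := by simp; linarith
        have hcont : ContinuousAt
            (fun t : ℝ => (y - z) / (y - t) * c + (z - t) / (y - t) * f y) 0 := by
          apply ContinuousAt.add
          · exact ((continuousAt_const.div
              (continuousAt_const.sub continuousAt_id) hy0).mul continuousAt_const)
          · exact (((continuousAt_const.sub continuousAt_id).div
              (continuousAt_const.sub continuousAt_id) hy0).mul continuousAt_const)
        have hval0 : (y - z) / (y - 0) * c + (z - 0) / (y - 0) * f y = p * c + q * f y := by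
          have hyne : y ≠ 0 := by linarith
          have hpq' : p = 1 - q := by linarith
          rw [hz, hpq']
          field_simp
          ring
        have htends : Filter.Tendsto
            (fun t : ℝ => (y - z) / (y - t) * c + (z - t) / (y - t) * f y)
            (nhdsWithin 0 (Set.Ioi 0)) (nhds (p * c + q * f y)) := by
          rw [← hval0]
          exact hcont.tendsto.mono_left nhdsWithin_le_nhds
        exact htends.eventually_lt_const (by linarith)
      obtain ⟨t, ht1, htI, ht3⟩ := (E1.and (E2.and E3)).exists
      obtain ⟨ht0, htz⟩ := htI
      have hty : t < y := lt_trans htz hzy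
      have hyt : 0 < y - t := by linarith
      have hlam : 0 ≤ (y - z) / (y - t) := div_nonneg (by linarith) hyt.le
      have hmu : 0 ≤ (z - t) / (y - t) := div_nonneg (by linarith) hyt.le
      have hytne : y - t ≠ 0 := ne_of_gt hyt
      have hsum : (y - z) / (y - t) + (z - t) / (y - t) = 1 := by
        field_simp
        ring
      have hcomb : (y - z) / (y - t) * t + (z - t) / (y - t) * y = z := by
        field_simp
        ring
      have hcv := hconv1.2 (Set.mem_Ioi.2 ht0) (Set.mem_Ioi.2 (by linarith : (0:ℝ) < y))
        hlam hmu hsum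
      simp only [smul_eq_mul] at hcv
      rw [hcomb] at hcv
      have h4 : (y - z) / (y - t) * f t ≤ (y - z) / (y - t) * c :=
        mul_le_mul_of_nonneg_left ht1.le hlam
      have hpne : p ≠ 0 := ne_of_gt hppos
      have hpc : p * c = p * f 0 + ε / 2 := by
        simp only [hc]
        field_simp
      linarith
    by_contra hcon
    push_neg at hcon
    have := main ((f z - (p * f 0 + q * f y)) / 2) (by linarith)
    linarith
  refine ⟨convex_Ici 0, ?_⟩
  intro x hx y hy p q hp hq hpq
  simp only [smul_eq_mul]
  rcases eq_or_lt_of_le (Set.mem_Ici.1 hx) with hx0 | hx0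
  · rcases eq_or_lt_of_le (Set.mem_Ici.1 hy) with hy0 | hy0
    · rw [← hx0, ← hy0]
      have h1 : p * 0 + q * 0 = (0:ℝ) := by ring
      have h2 : p * f 0 + q * f 0 = f 0 := by rw [← add_mul, hpq, one_mul]
      rw [h1, h2]
    · rw [← hx0]
      have := L0 y hy0 p q hp hq hpq
      have h1 : p * 0 + q * y = q * y := by ring
      rw [h1]
      exact this
  · rcases eq_or_lt_of_le (Set.mem_Ici.1 hy) with hy0 | hy0
    · rw [← hy0]
      have := L0 x hx0 q p hq hp (by linarith)
      have h1 : p * x + q * 0 = p * x := by ring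
      rw [h1]
      linarith
    · have := hconv1.2 (Set.mem_Ioi.2 hx0) (Set.mem_Ioi.2 hy0) hp hq hpq
      simpa using this
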